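/- Elementwise integration-by-parts identity for the WG bilinear form: for any φ ∈ H²(T) (or φ whose gradient has a well-defined normal trace) and any v = {v_0, v_b} ∈ W_k(T), (a ∇_w Q_h φ, ∇_w v)_T = (a∇φ, ∇v_0)_T − ⟨(a 𝕼_h ∇φ)·n, v_0 − v_b⟩_{∂T}, where a is a constant symmetric matrix on T. -/

import Mathlib

local notation "⟪" x ", " y "⟫" => @inner ℝ _ _ x y

/-- Elementwise integration-by-parts identity for the WG bilinear
form: for any `φ ∈ H²(T)` and any `v = {v₀, v_b} ∈ W_k(T)`,
`(a ∇_w Q_h φ, ∇_w v)_T = (a∇φ, ∇v₀)_T − ⟨(a 𝕼_h ∇φ)·n, v₀ − v_b⟩_{∂T}`,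
where `a` is a constant symmetric matrix on `T`.

Modeling on the element `T`: `L2T, L2dT, BdT` model `L²(T), [L²(T)]^d, L²(∂T)`;
`Pk = P_k(T)`, `PkB` the piecewise-`P_k` boundary space, `G = [P_{k-1}(T)]^d`;
`dvg, ntr` are divergence and normal trace, mapping `G` into `Pk`, `PkB`
(`hdvg`, `hntr`); `a` is symmetric (`hasym`) and, being a constant matrix, maps
`G` into itself (`haG`); `φ0 = φ|_T`, `φb = φ|_{∂T}`, `gradφ = ∇φ`, with
integration by parts `hibpφ`; `v₀ ∈ P_k(T)` with gradient
`gradv0 = ∇v₀ ∈ [P_{k-1}(T)]^d` (`hgv0G`), trace `trv0 = v₀|_{∂T}`, and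
integration by parts `hibpv`; `gwQ = ∇_w Q_hφ` and `gwv = ∇_w v` are the discrete
weak gradients, characterized by `hgwQ` and `hgwv`, where
`Q₀ = orthogonalProjection Pk`, `Q_b = orthogonalProjection PkB`,
`𝕼_h = orthogonalProjection G`. -/
theorem WG_elementwise_integration_by_parts
    {L2T L2dT BdT : Type*}
    [NormedAddCommGroup L2T] [InnerProductSpace ℝ L2T]
    [NormedAddCommGroup L2dT] [InnerProductSpace ℝ L2dT]
    [NormedAddCommGroup BdT] [InnerProductSpace ℝ BdT]
    (Pk : Submodule ℝ L2T) (PkB : Submodule ℝ BdT) (G : Submodule ℝ L2dT)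
    [Submodule.HasOrthogonalProjection Pk] [Submodule.HasOrthogonalProjection PkB]
    [Submodule.HasOrthogonalProjection G]
    (dvg : L2dT →ₗ[ℝ] L2T) (ntr : L2dT →ₗ[ℝ] BdT)
    (hdvg : ∀ q ∈ G, dvg q ∈ Pk) (hntr : ∀ q ∈ G, ntr q ∈ PkB)
    (a : L2dT →ₗ[ℝ] L2dT)
    (hasym : ∀ x y : L2dT, ⟪a x, y⟫ = ⟪x, a y⟫)
    (haG : ∀ q ∈ G, a q ∈ G)
    (φ0 : L2T) (φb : BdT) (gradφ : L2dT)
    (hibpφ : ∀ q ∈ G, ⟪gradφ, q⟫ = -⟪φ0, dvg q⟫ + ⟪φb, ntr q⟫)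
    (v0 : L2T) (hv0 : v0 ∈ Pk) (vb : BdT) (hvb : vb ∈ PkB)
    (gradv0 : L2dT) (hgv0G : gradv0 ∈ G) (trv0 : BdT)
    (hibpv : ∀ q ∈ G, ⟪gradv0, q⟫ = -⟪v0, dvg q⟫ + ⟪trv0, ntr q⟫)
    (gwQ : L2dT) (hgwQG : gwQ ∈ G)
    (hgwQ : ∀ q ∈ G, ⟪gwQ, q⟫ =
      -⟪(Submodule.orthogonalProjectionOnto Pk φ0 : L2T), dvg q⟫
        + ⟪(Submodule.orthogonalProjectionOnto PkB φb : BdT), ntr q⟫)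
    (gwv : L2dT) (hgwvG : gwv ∈ G)
    (hgwv : ∀ q ∈ G, ⟪gwv, q⟫ = -⟪v0, dvg q⟫ + ⟪vb, ntr q⟫) :
    ⟪a gwQ, gwv⟫
      = ⟪a gradφ, gradv0⟫
        - ⟪ntr (a (Submodule.orthogonalProjectionOnto G gradφ : L2dT)), trv0 - vb⟫ := by
  set p : L2dT := (Submodule.orthogonalProjectionOnto G gradφ : L2dT) with hp
  have hpG : p ∈ G := (Submodule.orthogonalProjectionOnto G gradφ).2
  -- projection property: ⟪gradφ, q⟫ = ⟪p, q⟫ for q ∈ G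
  have hproj : ∀ q ∈ G, ⟪gradφ, q⟫ = ⟪p, q⟫ := by
    intro q hq
    have := Submodule.starProjection_inner_eq_zero (K := G) gradφ q hq
    rw [Submodule.starProjection_apply, inner_sub_left] at this
    linarith
  have hQ0 : ∀ u ∈ Pk, ⟪(Submodule.orthogonalProjectionOnto Pk φ0 : L2T), u⟫ = ⟪φ0, u⟫ := by
    intro u hu
    have := Submodule.starProjection_inner_eq_zero (K := Pk) φ0 u hu
    rw [Submodule.starProjection_apply, inner_sub_left] at this
    linarith
  have hQb : ∀ u ∈ PkB, ⟪(Submodule.orthogonalProjectionOnto PkB φb : BdT), u⟫ = ⟪φb, u⟫ := by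
    intro u hu
    have := Submodule.starProjection_inner_eq_zero (K := PkB) φb u hu
    rw [Submodule.starProjection_apply, inner_sub_left] at this
    linarith
  -- commuting property: gwQ = p
  have hgwQp : gwQ = p := by
    have hsub : gwQ - p ∈ G := sub_mem hgwQG hpG
    have horth : ∀ q ∈ G, ⟪gwQ - p, q⟫ = 0 := by
      intro q hq
      rw [inner_sub_left, hgwQ q hq, hQ0 _ (hdvg q hq), hQb _ (hntr q hq),
        ← hproj q hq, hibpφ q hq]
      ring
    have := horth _ hsub
    rw [inner_self_eq_zero] at this
    exact sub_eq_zero.mp this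
  have hapG : a p ∈ G := haG p hpG
  have key : ⟪a gwQ, gwv⟫ = ⟪gradv0, a p⟫ - ⟪trv0 - vb, ntr (a p)⟫ := by
    rw [hgwQp, real_inner_comm, hgwv _ hapG, hibpv _ hapG, inner_sub_left]
    ring
  have h2 : ⟪gradv0, a p⟫ = ⟪a gradφ, gradv0⟫ := by
    rw [real_inner_comm, hasym p, hasym gradφ, ← hproj _ (haG _ hgv0G)]
  rw [key, h2, real_inner_comm (trv0 - vb)]
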